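/- Let L be an n×n real Z-matrix (off-diagonal entries nonpositive) with L·1 = 0, Lᵀ·1 = 0, and rank(L) = n−1. Partition L as L = [[B, −Be],[−eᵀB, eᵀBe]] where B is the leading (n−1)×(n−1) principal submatrix and e is the all-ones vector in ℝ^{n−1}. Then B is invertible and the Moore–Penrose inverse of L is given by L† = [[B⁻¹ − (1/n)eeᵀB⁻¹ − (1/n)B⁻¹eeᵀ, −(1/n)B⁻¹e],[−(1/n)eᵀB⁻¹, 0]] + (eᵀB⁻¹e/n²)·11ᵀ, where 1 is the all-ones vector in ℝ^n. -/

import Mathlib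

open Matrix Finset

/-- Out-degree of vertex `i` in the digraph with adjacency `A`. -/
def outdeg {n : ℕ} (A : Fin n → Fin n → Bool) (i : Fin n) : ℕ :=
  (Finset.univ.filter (fun j => A i j = true)).card

/-- In-degree of vertex `i`. -/
def indeg {n : ℕ} (A : Fin n → Fin n → Bool) (i : Fin n) : ℕ :=
  (Finset.univ.filter (fun j => A j i = true)).card

/-- Laplacian matrix of a digraph: diagonal = out-degree, `-1` on edges, `0` otherwise. -/
def lap {n : ℕ} (A : Fin n → Fin n → Bool) : Matrix (Fin n) (Fin n) ℝ :=
  Matrix.of fun i j => if i = j then (outdeg A i : ℝ) else if A i j then -1 else 0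

/-- Reachability by directed edges. -/
def Reach {n : ℕ} (A : Fin n → Fin n → Bool) : Fin n → Fin n → Prop :=
  Relation.ReflTransGen (fun a b => A a b = true)

def StronglyConnected {n : ℕ} (A : Fin n → Fin n → Bool) : Prop := ∀ i j, Reach A i j

def IsBalanced {n : ℕ} (A : Fin n → Fin n → Bool) : Prop := ∀ i, indeg A i = outdeg A i

/-- In-degree of `v` in an edge set `T`. -/
def tIndeg {n : ℕ} (T : Finset (Fin n × Fin n)) (v : Fin n) : ℕ :=
  (T.filter (fun e => e.2 = v)).card

/-- Reachability using only the edges of `T`. -/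
def ReachIn {n : ℕ} (T : Finset (Fin n × Fin n)) : Fin n → Fin n → Prop :=
  Relation.ReflTransGen (fun a b => (a, b) ∈ T)

/-- Spanning tree of the digraph rooted at `i` (spanning arborescence, edges directed
away from `i`): every vertex other than `i` has in-degree 1, `i` has in-degree 0, and
every vertex is reachable from `i` (i.e. the subgraph is connected and acyclic). -/
def IsSpanningTree {n : ℕ} (A : Fin n → Fin n → Bool) (i : Fin n)
    (T : Finset (Fin n × Fin n)) : Prop :=
  (∀ e ∈ T, A e.1 e.2 = true) ∧ tIndeg T i = 0 ∧
    (∀ v, v ≠ i → tIndeg T v = 1) ∧ (∀ v, ReachIn T i v)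

/-- Spanning forest with exactly two trees, rooted at `i` and `j`: two vertex-disjoint
arborescences partitioning the vertex set, with roots `i` and `j`. -/
def IsTwoForest {n : ℕ} (A : Fin n → Fin n → Bool) (i j : Fin n)
    (T : Finset (Fin n × Fin n)) : Prop :=
  (∀ e ∈ T, A e.1 e.2 = true) ∧ tIndeg T i = 0 ∧ tIndeg T j = 0 ∧
    (∀ v, v ≠ i → v ≠ j → tIndeg T v = 1) ∧ (∀ v, ReachIn T i v ∨ ReachIn T j v)

/-- `det L[{i}ᶜ, {i}ᶜ]`: determinant of the principal submatrix deleting row/column `i`. -/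
def minor1 {n : ℕ} (L : Matrix (Fin n) (Fin n) ℝ) (i : Fin n) : ℝ :=
  (L.submatrix (fun a : {x : Fin n // x ≠ i} => (a : Fin n))
    (fun a : {x : Fin n // x ≠ i} => (a : Fin n))).det

/-- `det L[{i,j}ᶜ, {i,j}ᶜ]`: determinant of the principal submatrix deleting rows and
columns `i` and `j`. -/
def minor2 {n : ℕ} (L : Matrix (Fin n) (Fin n) ℝ) (i j : Fin n) : ℝ :=
  (L.submatrix (fun a : {x : Fin n // x ≠ i ∧ x ≠ j} => (a : Fin n))
    (fun a : {x : Fin n // x ≠ i ∧ x ≠ j} => (a : Fin n))).det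

/-- `M` is the Moore–Penrose inverse of `L` (the four Penrose equations). -/
def IsMoorePenrose {n : ℕ} (L M : Matrix (Fin n) (Fin n) ℝ) : Prop :=
  L * M * L = L ∧ M * L * M = M ∧ (L * M)ᵀ = L * M ∧ (M * L)ᵀ = M * L

/-- Resistance `r_{ij} = l†_{ii} + l†_{jj} - 2 l†_{ij}` computed from `M = L†`. -/
def resist {n : ℕ} (M : Matrix (Fin n) (Fin n) ℝ) (i j : Fin n) : ℝ :=
  M i i + M j j - 2 * M i j

/-- Directed path from `i` to `j`: a list of distinct vertices starting at `i`, ending at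
`j`, consecutive ones joined by directed edges. -/
def IsPath {n : ℕ} (A : Fin n → Fin n → Bool) (i j : Fin n) (p : List (Fin n)) : Prop :=
  p.Chain' (fun a b => A a b = true) ∧ p.head? = some i ∧ p.getLast? = some j ∧ p.Nodup

/-- `s` is the edge set of a directed cycle of the digraph: the cyclically consecutive
pairs of a nonempty duplicate-free vertex list, all being directed edges. -/
def IsCycle {n : ℕ} (A : Fin n → Fin n → Bool) (s : Finset (Fin n × Fin n)) : Prop :=
  ∃ c : List (Fin n), 2 ≤ c.length ∧ c.Nodup ∧
    (∀ p ∈ c.zip (c.rotate 1), A p.1 p.2 = true) ∧ s = (c.zip (c.rotate 1)).toFinset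

/-- Vertex set of a cycle given by its edge set. -/
def cycVerts {n : ℕ} (s : Finset (Fin n × Fin n)) : Finset (Fin n) := s.image Prod.fst

/-- Directed cactus: strongly connected and every directed edge lies in exactly one
directed cycle. -/
def IsCactus {n : ℕ} (A : Fin n → Fin n → Bool) : Prop :=
  StronglyConnected A ∧
    ∀ i j : Fin n, A i j = true → ∃! s : Finset (Fin n × Fin n), IsCycle A s ∧ (i, j) ∈ s

/-- Classical distance: length (number of edges) of a shortest directed path. -/
noncomputable def pdist {n : ℕ} (A : Fin n → Fin n → Bool) (i j : Fin n) : ℕ :=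
  sInf {m : ℕ | ∃ p : List (Fin n), IsPath A i j p ∧ p.length = m + 1}

lemma mp_unique {n : ℕ} {L M N : Matrix (Fin n) (Fin n) ℝ}
    (hM : IsMoorePenrose L M) (hN : IsMoorePenrose L N) : M = N := by
  obtain ⟨hM1, hM2, hM3, hM4⟩ := hM
  obtain ⟨hN1, hN2, hN3, hN4⟩ := hN
  have hLM : L * M = L * N := by
    calc L * M = (L * M)ᵀ := hM3.symm
      _ = ((L * N * L) * M)ᵀ := by rw [hN1]
      _ = (L * M)ᵀ * (L * N)ᵀ := by rw [← transpose_mul]; simp only [Matrix.mul_assoc]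
      _ = (L * M) * (L * N) := by rw [hM3, hN3]
      _ = (L * M * L) * N := by simp only [Matrix.mul_assoc]
      _ = L * N := by rw [hM1]
  have hML : M * L = N * L := by
    calc M * L = (M * L)ᵀ := hM4.symm
      _ = (M * (L * N * L))ᵀ := by rw [hN1]
      _ = (N * L)ᵀ * (M * L)ᵀ := by rw [← transpose_mul]; simp only [Matrix.mul_assoc]
      _ = (N * L) * (M * L) := by rw [hM4, hN4]
      _ = N * (L * M * L) := by simp only [Matrix.mul_assoc]
      _ = N * L := by rw [hM1]
  calc M = M * L * M := hM2.symm
    _ = N * L * M := by rw [hML]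
    _ = N * (L * N) := by rw [← hLM]; simp only [Matrix.mul_assoc]
    _ = N := by rw [← Matrix.mul_assoc, hN2]

/-- explicit Moore–Penrose inverse of a rank `n-1` Z-matrix with zero row
and column sums, in terms of the inverse of its leading principal submatrix `B`. -/
theorem stmt_1 {n : ℕ} (L : Matrix (Fin (n+1)) (Fin (n+1)) ℝ)
    (hZ : ∀ i j, i ≠ j → L i j ≤ 0)
    (hrow : ∀ i, ∑ j, L i j = 0)
    (hcol : ∀ j, ∑ i, L i j = 0)
    (hrank : L.rank = n) :
    IsUnit (L.submatrix Fin.castSucc Fin.castSucc) ∧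
    ∀ M : Matrix (Fin (n+1)) (Fin (n+1)) ℝ, IsMoorePenrose L M →
    ∀ C : Matrix (Fin n) (Fin n) ℝ, C = (L.submatrix Fin.castSucc Fin.castSucc)⁻¹ →
      M = Matrix.of (fun i j : Fin (n+1) =>
        (if hi : i = Fin.last n then
          (if hj : j = Fin.last n then 0
            else -(1 / ((n : ℝ) + 1)) * ∑ k, C k (j.castPred hj))
          else if hj : j = Fin.last n then
            -(1 / ((n : ℝ) + 1)) * ∑ k, C (i.castPred hi) k
          else C (i.castPred hi) (j.castPred hj)
            - (1 / ((n : ℝ) + 1)) * ∑ k, C k (j.castPred hj)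
            - (1 / ((n : ℝ) + 1)) * ∑ k, C (i.castPred hi) k)
        + (∑ k, ∑ l, C k l) / ((n : ℝ) + 1) ^ 2) := by
  have hN1 : ((n:ℝ)+1) ≠ 0 := by positivity
  set B := L.submatrix Fin.castSucc Fin.castSucc with hBdef
  -- kernel of L is the span of the all-ones vector
  have hone : L.mulVec (fun _ => (1:ℝ)) = 0 := by
    funext i
    simpa [Matrix.mulVec, dotProduct] using hrow i
  have hnull : Module.finrank ℝ (LinearMap.ker L.mulVecLin) = 1 := by
    have h := LinearMap.finrank_range_add_finrank_ker L.mulVecLin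
    have h2 : Module.finrank ℝ (Fin (n+1) → ℝ) = n + 1 := by simp
    rw [h2] at h
    have h3 : L.rank = Module.finrank ℝ (LinearMap.range L.mulVecLin) := rfl
    omega
  have hspan : Submodule.span ℝ {fun _ => (1:ℝ)} = LinearMap.ker L.mulVecLin := by
    apply Submodule.eq_of_le_of_finrank_le
    · rw [Submodule.span_le, Set.singleton_subset_iff]
      exact LinearMap.mem_ker.mpr (by simpa using hone)
    · rw [hnull, finrank_span_singleton]
      intro h
      have := congrFun h 0
      simp at this
  have hker : ∀ v : Fin (n+1) → ℝ, L.mulVec v = 0 → ∃ c : ℝ, v = fun _ => c := by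
    intro v hv
    have hmem : v ∈ Submodule.span ℝ {fun _ => (1:ℝ)} :=
      hspan ▸ LinearMap.mem_ker.mpr (by simpa using hv)
    obtain ⟨d, hd⟩ := Submodule.mem_span_singleton.mp hmem
    exact ⟨d, by rw [← hd]; funext j; simp⟩
  -- expressions for last row/column of L
  have hcol' : ∀ j' : Fin n, L (Fin.last n) (Fin.castSucc j') = -∑ i', B i' j' := by
    intro j'
    have h := hcol (Fin.castSucc j')
    rw [Fin.sum_univ_castSucc] at h
    have : ∀ i', B i' j' = L (Fin.castSucc i') (Fin.castSucc j') := fun i' => rfl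
    simp only [this]
    linarith
  have hrow' : ∀ i' : Fin n, L (Fin.castSucc i') (Fin.last n) = -∑ j', B i' j' := by
    intro i'
    have h := hrow (Fin.castSucc i')
    rw [Fin.sum_univ_castSucc] at h
    have : ∀ j', B i' j' = L (Fin.castSucc i') (Fin.castSucc j') := fun j' => rfl
    simp only [this]
    linarith
  -- B is invertible
  have hdet : B.det ≠ 0 := by
    intro h
    obtain ⟨v, hv0, hv⟩ := Matrix.exists_mulVec_eq_zero_iff.mpr h
    set w : Fin (n+1) → ℝ := Fin.snoc v 0 with hw
    have hLw : L.mulVec w = 0 := by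
      funext i
      have hsum : L.mulVec w i = ∑ j', L i (Fin.castSucc j') * v j' := by
        rw [Matrix.mulVec, dotProduct, Fin.sum_univ_castSucc]
        simp [hw]
      induction i using Fin.lastCases with
      | last =>
        rw [hsum]
        simp only [hcol', neg_mul, Finset.sum_neg_distrib, Finset.sum_mul]
        rw [Finset.sum_comm]
        have : ∀ i', ∑ j', B i' j' * v j' = 0 := by
          intro i'
          have := congrFun hv i'
          simpa [Matrix.mulVec, dotProduct] using this
        simp [this]
      | cast i' =>
        rw [hsum]
        have := congrFun hv i'
        simpa [Matrix.mulVec, dotProduct, hBdef] using this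
    obtain ⟨d, hd⟩ := hker w hLw
    have hd0 : d = 0 := by
      have := congrFun hd (Fin.last n)
      simp [hw] at this
      exact this.symm
    apply hv0
    funext i'
    have := congrFun hd (Fin.castSucc i')
    rw [hd0] at this
    simpa [hw] using this
  have hBunit : IsUnit B := (Matrix.isUnit_iff_isUnit_det B).mpr (isUnit_iff_ne_zero.mpr hdet)
  refine ⟨hBunit, ?_⟩
  intro M hM C hC
  subst hC
  -- abbreviations
  set C := B⁻¹ with hCdef
  have hBC : B * C = 1 := Matrix.mul_nonsing_inv B (isUnit_iff_ne_zero.mpr hdet)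
  have hCB : C * B = 1 := Matrix.nonsing_inv_mul B (isUnit_iff_ne_zero.mpr hdet)
  set S : ℝ := ∑ k, ∑ l, C k l with hSdef
  set c : ℝ := 1/((n:ℝ)+1) with hc
  set J : Matrix (Fin (n+1)) (Fin (n+1)) ℝ := Matrix.of (fun _ _ => (1:ℝ)) with hJdef
  set Ch : Matrix (Fin (n+1)) (Fin (n+1)) ℝ := Matrix.of (fun i j =>
    if hi : i = Fin.last n then 0 else if hj : j = Fin.last n then 0
    else C (i.castPred hi) (j.castPred hj)) with hChdef
  set F : Matrix (Fin (n+1)) (Fin (n+1)) ℝ :=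
    Matrix.of (fun i _ => if i = Fin.last n then (1:ℝ) else 0) with hFdef
  set G : Matrix (Fin (n+1)) (Fin (n+1)) ℝ :=
    Matrix.of (fun _ j => if j = Fin.last n then (1:ℝ) else 0) with hGdef
  set P : Matrix (Fin (n+1)) (Fin (n+1)) ℝ := 1 - c • J with hPdef
  -- entry lemmas for Ch
  have hChc : ∀ (i' j' : Fin n), Ch (Fin.castSucc i') (Fin.castSucc j') = C i' j' := by
    intro i' j'
    simp [hChdef, (Fin.castSucc_lt_last i').ne, (Fin.castSucc_lt_last j').ne]
  have hChl : ∀ j, Ch (Fin.last n) j = 0 := by intro j; simp [hChdef]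
  have hChr : ∀ i, Ch i (Fin.last n) = 0 := by
    intro i; by_cases hi : i = Fin.last n <;> simp [hChdef, hi]
  -- basic products
  have hJJ : J * J = ((n:ℝ)+1) • J := by
    ext i j; simp [hJdef, Matrix.mul_apply, Finset.card_univ]
  have hLJ : L * J = 0 := by
    ext i j; simp [hJdef, Matrix.mul_apply, hrow i]
  have hJL : J * L = 0 := by
    ext i j; simp [hJdef, Matrix.mul_apply, hcol j]
  have hFJ : F * J = ((n:ℝ)+1) • F := by
    ext i j
    by_cases hi : i = Fin.last n <;>
      simp [hFdef, hJdef, Matrix.mul_apply, hi, Finset.card_univ]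
  have hJG : J * G = ((n:ℝ)+1) • G := by
    ext i j
    by_cases hj : j = Fin.last n <;>
      simp [hGdef, hJdef, Matrix.mul_apply, hj, Finset.card_univ]
  -- L * Ch = 1 - F
  have hLC : L * Ch = 1 - F := by
    ext i j
    rw [Matrix.mul_apply]
    induction j using Fin.lastCases with
    | last =>
      by_cases hi : i = Fin.last n <;>
        simp [hChr, hFdef, Matrix.one_apply, hi]
    | cast j' =>
      rw [Fin.sum_univ_castSucc]
      simp only [hChl, mul_zero, add_zero]
      induction i using Fin.lastCases with
      | last =>
        have h1 : ∀ k' : Fin n, L (Fin.last n) (Fin.castSucc k') * Ch (Fin.castSucc k') (Fin.castSucc j')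
            = -∑ i', B i' k' * C k' j' := by
          intro k'
          rw [hChc, hcol', neg_mul, Finset.sum_mul]
        rw [Finset.sum_congr rfl (fun k' _ => h1 k'), Finset.sum_neg_distrib, Finset.sum_comm]
        have h2 : ∀ i' : Fin n, ∑ k', B i' k' * C k' j' = if i' = j' then 1 else 0 := by
          intro i'
          rw [← Matrix.mul_apply, hBC, Matrix.one_apply]
        rw [Finset.sum_congr rfl (fun i' _ => h2 i')]
        simp [Matrix.one_apply, hFdef, (Fin.castSucc_lt_last j').ne']
      | cast i' =>
        have h1 : ∀ k' : Fin n, L (Fin.castSucc i') (Fin.castSucc k') * Ch (Fin.castSucc k') (Fin.castSucc j')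
            = B i' k' * C k' j' := by
          intro k'; rw [hChc]; rfl
        rw [Finset.sum_congr rfl (fun k' _ => h1 k'), ← Matrix.mul_apply, hBC]
        simp [Matrix.one_apply, hFdef, Fin.castSucc_inj, (Fin.castSucc_lt_last i').ne]
  -- Ch * L = 1 - G
  have hCL : Ch * L = 1 - G := by
    ext i j
    rw [Matrix.mul_apply]
    induction i using Fin.lastCases with
    | last =>
      by_cases hj : j = Fin.last n <;>
        simp [hChl, hGdef, Matrix.one_apply, hj, Ne.symm]
    | cast i' =>
      rw [Fin.sum_univ_castSucc]
      simp only [hChr, zero_mul, add_zero]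
      induction j using Fin.lastCases with
      | last =>
        have h1 : ∀ k' : Fin n, Ch (Fin.castSucc i') (Fin.castSucc k') * L (Fin.castSucc k') (Fin.last n)
            = -∑ j', C i' k' * B k' j' := by
          intro k'
          rw [hChc, hrow', mul_neg, Finset.mul_sum]
        rw [Finset.sum_congr rfl (fun k' _ => h1 k'), Finset.sum_neg_distrib, Finset.sum_comm]
        have h2 : ∀ j' : Fin n, ∑ k', C i' k' * B k' j' = if i' = j' then 1 else 0 := by
          intro j'
          rw [← Matrix.mul_apply, hCB, Matrix.one_apply]
        rw [Finset.sum_congr rfl (fun j' _ => h2 j')]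
        simp [Matrix.one_apply, hGdef, (Fin.castSucc_lt_last i').ne]
      | cast j' =>
        have h1 : ∀ k' : Fin n, Ch (Fin.castSucc i') (Fin.castSucc k') * L (Fin.castSucc k') (Fin.castSucc j')
            = C i' k' * B k' j' := by
          intro k'; rw [hChc]; rfl
        rw [Finset.sum_congr rfl (fun k' _ => h1 k'), ← Matrix.mul_apply, hCB]
        simp [Matrix.one_apply, hGdef, Fin.castSucc_inj, (Fin.castSucc_lt_last j').ne]
  -- entries of J*Ch and Ch*J
  have hJCh : ∀ (i l : Fin (n+1)), (J * Ch) i l =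
      if hl : l = Fin.last n then 0 else ∑ k', C k' (l.castPred hl) := by
    intro i l
    rw [Matrix.mul_apply]
    by_cases hl : l = Fin.last n
    · simp [hl, hChr]
    · rw [dif_neg hl, Fin.sum_univ_castSucc]
      simp only [hChl, mul_zero, add_zero]
      rw [Finset.sum_congr rfl (fun k' _ => ?_)]
      have : Ch (Fin.castSucc k') l = C k' (l.castPred hl) := by
        simp [hChdef, (Fin.castSucc_lt_last k').ne, hl]
      simp [hJdef, this]
  have hChJ : ∀ (i l : Fin (n+1)), (Ch * J) i l =
      if hi : i = Fin.last n then 0 else ∑ k', C (i.castPred hi) k' := by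
    intro i l
    rw [Matrix.mul_apply]
    by_cases hi : i = Fin.last n
    · simp [hi, hChl]
    · rw [dif_neg hi, Fin.sum_univ_castSucc]
      simp only [hChr, zero_mul, add_zero]
      rw [Finset.sum_congr rfl (fun k' _ => ?_)]
      have : Ch i (Fin.castSucc k') = C (i.castPred hi) k' := by
        simp [hChdef, (Fin.castSucc_lt_last k').ne, hi]
      simp [hJdef, this]
  have hJCJ : J * (Ch * J) = S • J := by
    ext i j
    rw [Matrix.mul_apply]
    have h1 : ∀ l, J i l * (Ch * J) l j = (Ch * J) l j := by
      intro l; simp [hJdef]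
    rw [Finset.sum_congr rfl (fun l _ => h1 l), Fin.sum_univ_castSucc,
      hChJ (Fin.last n) j, dif_pos rfl, add_zero]
    rw [Finset.sum_congr rfl (fun l' _ => by
      rw [hChJ, dif_neg (Fin.castSucc_lt_last l').ne, Fin.castPred_castSucc])]
    simp [hJdef, hSdef]
  -- expansion of P * Ch * P
  have hexp : P * Ch * P = Ch - c • (J * Ch) - c • (Ch * J) + (c*c*S) • J := by
    rw [hPdef]
    have base : (1 - c•J) * Ch * (1 - c•J)
        = Ch - c•(J*Ch) - c•(Ch*J) + (c*c)•(J*(Ch*J)) := by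
      simp only [Matrix.sub_mul, Matrix.mul_sub, Matrix.one_mul, Matrix.mul_one,
        Matrix.smul_mul, Matrix.mul_smul, smul_smul, smul_sub, smul_add, Matrix.mul_assoc]
      abel
    rw [base, hJCJ, smul_smul]
  -- the formula matrix equals P * Ch * P
  have hM0 : (Matrix.of (fun i j : Fin (n+1) =>
        (if hi : i = Fin.last n then
          (if hj : j = Fin.last n then 0
            else -(1 / ((n : ℝ) + 1)) * ∑ k, C k (j.castPred hj))
          else if hj : j = Fin.last n then
            -(1 / ((n : ℝ) + 1)) * ∑ k, C (i.castPred hi) k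
          else C (i.castPred hi) (j.castPred hj)
            - (1 / ((n : ℝ) + 1)) * ∑ k, C k (j.castPred hj)
            - (1 / ((n : ℝ) + 1)) * ∑ k, C (i.castPred hi) k)
        + (∑ k, ∑ l, C k l) / ((n : ℝ) + 1) ^ 2) : Matrix (Fin (n+1)) (Fin (n+1)) ℝ)
      = P * Ch * P := by
    rw [hexp]
    ext i j
    rw [Matrix.add_apply, Matrix.sub_apply, Matrix.sub_apply, Matrix.smul_apply,
      Matrix.smul_apply, Matrix.smul_apply, hJCh, hChJ]
    have hJ1 : J i j = 1 := rfl
    rw [hJ1, Matrix.of_apply]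
    by_cases hi : i = Fin.last n <;> by_cases hj : j = Fin.last n
    · rw [dif_pos hi, dif_pos hj, dif_pos hi, dif_pos hj, hi, hChl]
      rw [hc, hSdef]
      simp only [div_eq_mul_inv, ← inv_pow]
      ring
    · rw [dif_pos hi, dif_neg hj, dif_pos hi, dif_neg hj, hi, hChl]
      rw [hc, hSdef]
      simp only [div_eq_mul_inv, ← inv_pow]
      ring
    · rw [dif_neg hi, dif_pos hj, dif_neg hi, dif_pos hj, hj, hChr]
      rw [hc, hSdef]
      simp only [div_eq_mul_inv, ← inv_pow]
      ring
    · rw [dif_neg hi, dif_neg hj, dif_neg hi, dif_neg hj]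
      have : Ch i j = C (i.castPred hi) (j.castPred hj) := by
        simp [hChdef, hi, hj]
      rw [this, hc, hSdef]
      simp only [div_eq_mul_inv, ← inv_pow]
      ring
  -- key products with P
  have hLP : L * P = L := by
    rw [hPdef, Matrix.mul_sub, Matrix.mul_one, Matrix.mul_smul, hLJ, smul_zero, sub_zero]
  have hPL : P * L = L := by
    rw [hPdef, Matrix.sub_mul, Matrix.one_mul, Matrix.smul_mul, hJL, smul_zero, sub_zero]
  have hcN : c * ((n:ℝ)+1) = 1 := by rw [hc]; field_simp
  have hJP : J * P = 0 := by
    rw [hPdef, Matrix.mul_sub, Matrix.mul_one, Matrix.mul_smul, hJJ, smul_smul, hcN,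
      one_smul, sub_self]
  have hFP : F * P = 0 := by
    rw [hPdef, Matrix.mul_sub, Matrix.mul_one, Matrix.mul_smul, hFJ, smul_smul, hcN,
      one_smul, sub_self]
  have hPG : P * G = 0 := by
    rw [hPdef, Matrix.sub_mul, Matrix.one_mul, Matrix.smul_mul, hJG, smul_smul, hcN,
      one_smul, sub_self]
  have hPt : Pᵀ = P := by
    rw [hPdef, Matrix.transpose_sub, Matrix.transpose_one, Matrix.transpose_smul]
    congr 1
  -- Penrose equations for P * Ch * P
  have hLM0 : L * (P * Ch * P) = P := by
    calc L * (P * Ch * P) = (L * P) * Ch * P := by simp only [Matrix.mul_assoc]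
      _ = (L * Ch) * P := by rw [hLP]
      _ = (1 - F) * P := by rw [hLC]
      _ = P - F * P := by rw [Matrix.sub_mul, Matrix.one_mul]
      _ = P := by rw [hFP, sub_zero]
  have hM0L : (P * Ch * P) * L = P := by
    calc (P * Ch * P) * L = P * Ch * (P * L) := by simp only [Matrix.mul_assoc]
      _ = P * (Ch * L) := by rw [hPL, Matrix.mul_assoc]
      _ = P * (1 - G) := by rw [hCL]
      _ = P - P * G := by rw [Matrix.mul_sub, Matrix.mul_one]
      _ = P := by rw [hPG, sub_zero]
  have hJM0 : J * (P * Ch * P) = 0 := by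
    calc J * (P * Ch * P) = (J * P) * (Ch * P) := by simp only [Matrix.mul_assoc]
      _ = 0 := by rw [hJP, Matrix.zero_mul]
  have hpen : IsMoorePenrose L (P * Ch * P) := by
    refine ⟨?_, ?_, ?_, ?_⟩
    · rw [hLM0, hPL]
    · rw [hM0L, hPdef, Matrix.sub_mul, Matrix.one_mul, Matrix.smul_mul, hJM0, smul_zero,
        sub_zero]
    · rw [hLM0, hPt]
    · rw [hM0L, hPt]
  rw [mp_unique hM hpen]
  exact hM0.symm
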